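/- Let D[1..n] be the array where D[i] is the depth in the position heap of the node labelled SA[i], and let E[1..n] be the sequence of depths of non-root nodes in pre-order traversal of the heap. Then E is a permutation of D; more precisely, for every depth d and rank r, the position i with D[i] equal to the r-th occurrence of d in D satisfies: SA[i] is the label of the r-th node from the left at depth d in the heap, which is also the node at the position of the r-th occurrence of d in E. -/

import Mathlib

theorem lemA {β : Type} (M : List β) (P : β → Bool) {i : ℕ} {x : β}
    (hx : M[i]? = some x) (hPx : P x) :
    (M.filter P)[((M.take i).filter P).length]? = some x := by
  have hi : i < M.length := by
    by_contra h
    simp [List.getElem?_eq_none (le_of_not_gt h)] at hx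
  have hMx : M[i] = x := by
    have := List.getElem?_eq_getElem hi
    rw [hx] at this; exact (Option.some_inj.mp this.symm)
  have hdec : M = M.take i ++ x :: M.drop (i+1) := by
    conv_lhs => rw [← List.take_append_drop i M]
    rw [List.drop_eq_getElem_cons hi, hMx]
  set r := ((M.take i).filter P).length with hr
  conv_lhs => rw [hdec]
  rw [List.filter_append, List.filter_cons_of_pos hPx,
    List.getElem?_append_right hr.symm.le]
  simp [hr]

theorem lemB {β : Type} (L : List β) (P : β → Bool) {r : ℕ} {p : β}
    (h : (L.filter P)[r]? = some p) :
    ∃ t, L[t]? = some p ∧ ((L.take t).filter P).length = r := by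
  induction L generalizing r with
  | nil => simp at h
  | cons a L ih =>
    by_cases hPa : P a
    · rw [List.filter_cons_of_pos hPa] at h
      cases r with
      | zero =>
        refine ⟨0, ?_, ?_⟩ <;> simp_all
      | succ r =>
        simp only [List.getElem?_cons_succ] at h
        obtain ⟨t, ht, hc⟩ := ih h
        exact ⟨t+1, by simpa using ht, by simp [List.filter_cons_of_pos hPa, hc]⟩
    · rw [List.filter_cons_of_neg hPa] at h
      obtain ⟨t, ht, hc⟩ := ih h
      exact ⟨t+1, by simpa using ht, by simp [List.filter_cons_of_neg hPa, hc]⟩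

theorem lemLex {α : Type} [LinearOrder α] : ∀ {a b u v : List α}, a.length = b.length → a ≠ b →
    List.Lex (· < ·) (a ++ u) (b ++ v) → List.Lex (· < ·) a b := by
  intro a
  induction a with
  | nil => intro b u v hlen hne _; cases b with
    | nil => exact absurd rfl hne
    | cons y b' => exact List.Lex.nil
  | cons x a' ih =>
    intro b u v hlen hne h
    cases b with
    | nil => simp at hlen
    | cons y b' =>
      cases h with
      | cons h' =>
        refine List.Lex.cons (ih (by simpa using hlen) ?_ h')
        intro e; exact hne (by rw [e])
      | rel hr => exact List.Lex.rel hr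

theorem countLen {α : Type} (l : List (List α)) (d : ℕ) :
    (l.map List.length).count d = (l.filter (fun q => decide (q.length = d))).length := by
  induction l with
  | nil => simp
  | cons a l ih => by_cases h : a.length = d <;> simp [List.count_cons, h, ih]

/-- Let `D[1..n]` be the array where `D[i]` is the depth in the
position heap of the node labelled `SA[i]`, and let `E[1..n]` be the sequence
of depths of the non-root nodes in pre-order traversal of the heap (pre-order
traversal enumerates the nodes in lexicographic order of path labels, where a
prefix precedes its extensions).  Then `E` is a permutation of `D`; moreover,
for every depth `d` and rank `r`, if `D[i]` is the `r`-th occurrence of `d` in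
`D` (indices and rank `0`-based here), then `SA[i]` is the label of the `r`-th
node from the left at depth `d` in the heap, which is also the node at the
position of the `r`-th occurrence of `d` in `E`. -/
theorem positionHeap_D_perm_E_and_rank_correspondence
    {α : Type} [LinearOrder α]
    (S T : List α) (c : α) (hS : S = T ++ [c]) (hc : c ∉ T)
    (nodes : Finset (List α)) (lab : List α → ℕ) (nodeOf : ℕ → List α)
    (hpc : ∀ p ∈ nodes, ∀ q : List α, q <+: p → q ∈ nodes)
    (hbij : Set.BijOn lab ↑nodes (Set.Iic S.length))
    (hroot : ([] : List α) ∈ nodes ∧ lab [] = 0)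
    (hheap : ∀ p ∈ nodes, ∀ q ∈ nodes, p <+: q → lab p ≤ lab q)
    (hpath : ∀ p ∈ nodes, 1 ≤ lab p → p <+: S.drop (lab p - 1))
    (hnodeOf : ∀ i ≤ S.length, nodeOf i ∈ nodes ∧ lab (nodeOf i) = i)
    (SA : ℕ → ℕ)
    (hSA : Set.BijOn SA (Set.Icc 1 S.length) (Set.Icc 1 S.length))
    (hSAsorted : ∀ i j : ℕ, 1 ≤ i → i < j → j ≤ S.length →
      List.Lex (· < ·) (S.drop (SA i - 1)) (S.drop (SA j - 1))) :
    -- `L` is the pre-order (lexicographic) enumeration of the non-root nodes,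
    -- `E` its list of depths, and `D` the list of depths of nodes labelled
    -- `SA[1], ..., SA[n]`.
    List.Perm
      ((List.range S.length).map (fun k => (nodeOf (SA (k + 1))).length))
      (((nodes.erase ([] : List α)).sort (· ≤ ·)).map List.length) ∧
    (∀ d r i : ℕ, i < S.length →
      ((List.range S.length).map (fun k => (nodeOf (SA (k + 1))).length))[i]? = some d →
      (((List.range S.length).map
          (fun k => (nodeOf (SA (k + 1))).length)).take i).count d = r →
      ∃ (p : List α) (t : ℕ),
        -- `p` is the `r`-th node from the left at depth `d`
        (((nodes.filter (fun q => q.length = d)).sort (· ≤ ·))[r]? = some p) ∧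
        -- its label is `SA[i]`
        lab p = SA (i + 1) ∧
        -- and it sits at the position of the `r`-th occurrence of `d` in `E`
        (((nodes.erase ([] : List α)).sort (· ≤ ·)).map List.length)[t]? = some d ∧
        ((((nodes.erase ([] : List α)).sort (· ≤ ·)).map List.length).take t).count d = r ∧
        ((nodes.erase ([] : List α)).sort (· ≤ ·))[t]? = some p) := by
  set n := S.length with hn
  set f : ℕ → List α := fun k => nodeOf (SA (k + 1)) with hf
  have hDfact : (List.range n).map (fun k => (nodeOf (SA (k + 1))).length)
      = ((List.range n).map f).map List.length := by
    rw [List.map_map]; rfl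
  set M : List (List α) := (List.range n).map f with hM
  set L : List (List α) := (nodes.erase ([] : List α)).sort (· ≤ ·) with hL
  -- basic facts
  have hSAmem : ∀ k < n, SA (k + 1) ∈ Set.Icc 1 n := by
    intro k hk
    exact hSA.mapsTo ⟨by omega, by omega⟩
  have hfmem : ∀ k < n, f k ∈ nodes ∧ lab (f k) = SA (k + 1) := by
    intro k hk
    exact hnodeOf _ (hSAmem k hk).2
  have hfne : ∀ k < n, f k ≠ [] := by
    intro k hk he
    have h1 := (hfmem k hk).2
    rw [he, hroot.2] at h1
    have := (hSAmem k hk).1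
    omega
  have hfinj : ∀ k < n, ∀ l < n, f k = f l → k = l := by
    intro k hk l hl he
    have h1 : SA (k + 1) = SA (l + 1) := by
      rw [← (hfmem k hk).2, ← (hfmem l hl).2, he]
    have := hSA.injOn ⟨by omega, by omega⟩ ⟨by omega, by omega⟩ h1
    omega
  have hMnodup : M.Nodup := by
    refine List.Nodup.map_on ?_ (List.nodup_range (n := n))
    intro k hk l hl he
    exact hfinj k (List.mem_range.mp hk) l (List.mem_range.mp hl) he
  have hMmem : ∀ x, x ∈ M ↔ (x ∈ nodes ∧ x ≠ []) := by
    intro x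
    constructor
    · intro hx
      obtain ⟨k, hk, rfl⟩ := List.mem_map.mp hx
      have hk' := List.mem_range.mp hk
      exact ⟨(hfmem k hk').1, hfne k hk'⟩
    · rintro ⟨hx, hxne⟩
      have hlabx : lab x ≤ n := hbij.mapsTo hx
      have hlabx0 : lab x ≠ 0 := by
        intro h0
        exact hxne (hbij.injOn hx hroot.1 (by rw [h0, hroot.2]))
      obtain ⟨j, hj, hjx⟩ := hSA.surjOn ⟨by omega, hlabx⟩
      obtain ⟨hj1, hj2⟩ := hj
      refine List.mem_map.mpr ⟨j - 1, List.mem_range.mpr (by omega), ?_⟩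
      have hj' : j - 1 + 1 = j := by omega
      have h1 : f (j - 1) = nodeOf (lab x) := by rw [hf]; simp only [hj', hjx]
      rw [h1]
      have h2 := hnodeOf (lab x) hlabx
      exact hbij.injOn h2.1 hx h2.2
  have hLnodup : L.Nodup := Finset.sort_nodup _ _
  have hLsorted : L.Pairwise (· ≤ ·) := Finset.pairwise_sort _ _
  have hLmem : ∀ x, x ∈ L ↔ (x ∈ nodes ∧ x ≠ []) := by
    intro x
    rw [hL, Finset.mem_sort, Finset.mem_erase]
    tauto
  have hML : M.Perm L := by
    refine List.perm_of_nodup_nodup_toFinset_eq hMnodup hLnodup ?_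
    ext x
    simp only [List.mem_toFinset, hMmem, hLmem]
  constructor
  · rw [hDfact]
    exact hML.map List.length
  · intro d r i hi hDi hcount
    rw [hDfact] at hDi hcount
    set P : List α → Bool := fun q => decide (q.length = d) with hP
    -- the i-th entry of M
    have hMi : M[i]? = some (f i) := by
      rw [hM, List.getElem?_map, List.getElem?_range hi]
      rfl
    have hfid : (f i).length = d := by
      rw [List.getElem?_map, hMi] at hDi
      simpa using hDi
    have hPfi : P (f i) := by simp [hP, hfid]
    have hd0 : d ≠ 0 := by
      intro h0
      exact hfne i hi (List.eq_nil_of_length_eq_zero (by rw [hfid, h0]))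
    -- sortedness of M.filter P
    have hMPsorted : (M.filter P).Pairwise (· < ·) := by
      rw [hM, hP]
      refine List.pairwise_filter.mpr (List.pairwise_map.mpr ((List.pairwise_lt_range (n := n)).imp_of_mem ?_))
      intro k l hk hl hkl hPk hPl
      have hk' := List.mem_range.mp hk
      have hl' := List.mem_range.mp hl
      have hne : f k ≠ f l := fun he => absurd (hfinj k hk' l hl' he) (by omega)
      have hlen : (f k).length = (f l).length := by rw [of_decide_eq_true hPk, of_decide_eq_true hPl]
      obtain ⟨u, hu⟩ := hpath _ (hfmem k hk').1
        (by rw [(hfmem k hk').2]; exact (hSAmem k hk').1)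
      obtain ⟨v, hv⟩ := hpath _ (hfmem l hl').1
        (by rw [(hfmem l hl').2]; exact (hSAmem l hl').1)
      have hlex := hSAsorted (k + 1) (l + 1) (by omega) (by omega) (by omega)
      rw [← (hfmem k hk').2, ← (hfmem l hl').2, ← hu, ← hv] at hlex
      exact lemLex hlen hne hlex
    have hMPsorted' : (M.filter P).Pairwise (· ≤ ·) :=
      hMPsorted.imp le_of_lt
    have hMPnodup : (M.filter P).Nodup := hMnodup.filter P
    -- L.filter P equals M.filter P
    have hEq1 : M.filter P = L.filter P :=
      List.Perm.eq_of_pairwise' hMPsorted'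
        (hLsorted.sublist (List.filter_sublist (l := L))) (hML.filter P)
    -- M.filter P equals the sorted finset filter
    have hEq2 : M.filter P = (nodes.filter (fun q => q.length = d)).sort (· ≤ ·) := by
      refine List.Perm.eq_of_pairwise' hMPsorted' (Finset.pairwise_sort _ _)
        (List.perm_of_nodup_nodup_toFinset_eq hMPnodup (Finset.sort_nodup _ _) ?_)
      ext x
      simp only [List.mem_toFinset, List.mem_filter, hMmem, Finset.mem_sort,
        Finset.mem_filter, hP, decide_eq_true_eq]
      constructor
      · rintro ⟨⟨h1, _⟩, h3⟩; exact ⟨h1, h3⟩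
      · rintro ⟨h1, h2⟩
        refine ⟨⟨h1, ?_⟩, h2⟩
        intro he; rw [he] at h2; simp at h2; omega
    -- rank in M
    have hcount' : ((M.take i).filter P).length = r := by
      rw [← hcount]
      conv_rhs => rw [← List.map_take, countLen]
    have hMr : (M.filter P)[r]? = some (f i) := by
      rw [← hcount']
      exact lemA M P hMi hPfi
    -- position t in L
    have hLr : (L.filter P)[r]? = some (f i) := by rw [← hEq1]; exact hMr
    obtain ⟨t, hLt, htc⟩ := lemB L P hLr
    refine ⟨f i, t, ?_, ?_, ?_, ?_, hLt⟩
    · rw [← hEq2]; exact hMr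
    · exact (hfmem i hi).2
    · rw [List.getElem?_map, hLt]
      simp [hfid]
    · conv_lhs => rw [← List.map_take, countLen]
      rw [hP] at htc
      exact htc
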